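/- For every positive integer m, the number of pairs (x,y) ∈ ℤ² with x² + y² = m equals 4 times the sum of (-1)^{(d-1)/2} over all odd divisors d of m. -/

import Mathlib

open scoped BigOperators

namespace SumTwoSquaresAux

open Zsqrtd GaussianInt Finset

local notation "ℤ[i]" => GaussianInt

lemma prime_of_norm_prime {π : ℤ[i]} (h : Prime π.norm) : Prime π := by
  have hirr : Irreducible π := by
    constructor
    · intro hu
      exact h.not_unit (Int.isUnit_iff_natAbs_eq.2 (Zsqrtd.norm_eq_one_iff.2 hu))
    · intro a b hab
      have hn : π.norm = a.norm * b.norm := by rw [hab, Zsqrtd.norm_mul]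
      rcases h.irreducible.isUnit_or_isUnit hn with h' | h'
      · exact Or.inl (Zsqrtd.norm_eq_one_iff.1 (Int.isUnit_iff_natAbs_eq.1 h'))
      · exact Or.inr (Zsqrtd.norm_eq_one_iff.1 (Int.isUnit_iff_natAbs_eq.1 h'))
  exact hirr.prime

def S (m : ℕ) : Set ℤ[i] := {z | z.norm = (m : ℤ)}

lemma mem_S_one {z : ℤ[i]} : z ∈ S 1 ↔ IsUnit z := by
  rw [← Zsqrtd.norm_eq_one_iff]
  have := GaussianInt.norm_nonneg z
  constructor
  · intro h; simp only [S, Set.mem_setOf_eq] at h; omega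
  · intro h; simp only [S, Set.mem_setOf_eq]; push_cast; omega

lemma S_one_eq : S 1 = {(⟨1,0⟩ : ℤ[i]), ⟨-1,0⟩, ⟨0,1⟩, ⟨0,-1⟩} := by
  ext z
  simp only [S, Set.mem_setOf_eq, Set.mem_insert_iff, Set.mem_singleton_iff, Zsqrtd.ext_iff]
  rw [Zsqrtd.norm_def]
  constructor
  · intro h
    push_cast at h
    have h' : z.re * z.re + z.im * z.im = 1 := by linarith
    have h1 : z.re * z.re ≤ 1 := by nlinarith [mul_self_nonneg z.im]
    have h2 : z.im * z.im ≤ 1 := by nlinarith [mul_self_nonneg z.re]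
    have hr : -1 ≤ z.re ∧ z.re ≤ 1 := by constructor <;> nlinarith
    have hi : -1 ≤ z.im ∧ z.im ≤ 1 := by constructor <;> nlinarith
    obtain ⟨hr1, hr2⟩ := hr; obtain ⟨hi1, hi2⟩ := hi
    interval_cases z.re <;> interval_cases z.im <;> omega
  · push_cast
    rintro (⟨h1,h2⟩|⟨h1,h2⟩|⟨h1,h2⟩|⟨h1,h2⟩) <;> rw [h1, h2] <;> ring

lemma ncard_S_one : (S 1).ncard = 4 := by
  rw [S_one_eq]
  rw [Set.ncard_insert_of_notMem (by simp [Zsqrtd.ext_iff]),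
      Set.ncard_insert_of_notMem (by simp [Zsqrtd.ext_iff]),
      Set.ncard_insert_of_notMem (by simp [Zsqrtd.ext_iff]),
      Set.ncard_singleton]

lemma S_finite (m : ℕ) : (S m).Finite := by
  have h : S m ⊆ (fun p : ℤ × ℤ => (⟨p.1, p.2⟩ : ℤ[i])) ''
      (Set.Icc (-(m:ℤ)) m ×ˢ Set.Icc (-(m:ℤ)) m) := by
    intro z hz
    have hn : z.re^2 + z.im^2 = (m:ℤ) := by
      rw [← hz]; rw [Zsqrtd.norm_def]; ring
    refine ⟨(z.re, z.im), ?_, rfl⟩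
    constructor <;> constructor <;>
      nlinarith [sq_nonneg z.re, sq_nonneg z.im, sq_nonneg (z.re+1), sq_nonneg (z.re-1),
        sq_nonneg (z.im+1), sq_nonneg (z.im-1)]
  exact (((Set.finite_Icc _ _).prod (Set.finite_Icc _ _)).image _).subset h

noncomputable def unitsEquiv : ℤ[i]ˣ ≃ ↥(S 1) where
  toFun := fun u => ⟨u, mem_S_one.2 u.isUnit⟩
  invFun := fun z => (mem_S_one.1 z.2).unit
  left_inv := fun u => Units.ext (mem_S_one.1 (mem_S_one.2 u.isUnit)).unit_spec
  right_inv := fun z => Subtype.ext (mem_S_one.1 z.2).unit_spec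

instance : Finite ℤ[i]ˣ := by
  have : Finite ↥(S 1) := (S_finite 1).to_subtype
  exact Finite.of_equiv _ unitsEquiv.symm

lemma card_units : Nat.card ℤ[i]ˣ = 4 := by
  rw [Nat.card_congr unitsEquiv, Nat.card_coe_set_eq, ncard_S_one]

lemma mem_S {z : ℤ[i]} {m : ℕ} : z ∈ S m ↔ z.norm = (m:ℤ) := Iff.rfl

lemma star_dvd_of_dvd_star {π z : ℤ[i]} (h : π ∣ star z) : star π ∣ z := by
  have := map_dvd (starRingEnd ℤ[i]) h
  simpa [starRingEnd_apply] using this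

lemma prime_dvd_or {π z : ℤ[i]} (hπ : Prime π) {m : ℕ} (hz : z.norm = (m:ℤ))
    (hdvd : π ∣ (m : ℤ[i])) : π ∣ z ∨ star π ∣ z := by
  have h1 : (m : ℤ[i]) = z * star z := by
    have := Zsqrtd.norm_eq_mul_conj z
    rw [hz] at this
    exact_mod_cast this
  rcases hπ.dvd_mul.1 (h1 ▸ hdvd) with h | h
  · exact Or.inl h
  · exact Or.inr (star_dvd_of_dvd_star h)

lemma norm_unit (u : ℤ[i]ˣ) : (u : ℤ[i]).norm = 1 := by
  have h := Zsqrtd.norm_eq_one_iff.2 u.isUnit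
  have := GaussianInt.norm_nonneg (u : ℤ[i])
  omega

lemma isCoprime_cast {m n : ℕ} (h : m.Coprime n) : IsCoprime (m : ℤ[i]) (n : ℤ[i]) := by
  have h2 : IsCoprime (m : ℤ) (n : ℤ) := Int.isCoprime_iff_gcd_eq_one.2 h
  have := h2.map (Int.castRingHom ℤ[i])
  simpa using this

-- split uniqueness
lemma split_unique {m n : ℕ} (hmn : m.Coprime n) (hm0 : m ≠ 0) {a b a' b' : ℤ[i]}
    (hma : a.norm = (m:ℤ)) (hnb : b.norm = (n:ℤ)) (hma' : a'.norm = (m:ℤ)) (hnb' : b'.norm = (n:ℤ))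
    (h : a * b = a' * b') : ∃! u : ℤ[i]ˣ, a' = a * u ∧ b' = ↑u⁻¹ * b := by
  have ha0 : a ≠ 0 := by
    intro h0; rw [h0] at hma; simp [Zsqrtd.norm_zero] at hma; exact hm0 (by exact_mod_cast hma.symm)
  have hdm : ∀ c : ℤ[i], c.norm = (m:ℤ) → c ∣ (m : ℤ[i]) := by
    intro c hc
    refine ⟨star c, ?_⟩
    have := Zsqrtd.norm_eq_mul_conj c
    rw [hc] at this
    exact_mod_cast this
  have hdn : ∀ c : ℤ[i], c.norm = (n:ℤ) → c ∣ (n : ℤ[i]) := by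
    intro c hc
    refine ⟨star c, ?_⟩
    have := Zsqrtd.norm_eq_mul_conj c
    rw [hc] at this
    exact_mod_cast this
  have hcop : IsCoprime (m : ℤ[i]) (n : ℤ[i]) := isCoprime_cast hmn
  have cop1 : IsCoprime a b' := (hcop.of_isCoprime_of_dvd_left (hdm a hma)).of_isCoprime_of_dvd_right (hdn b' hnb')
  have cop2 : IsCoprime a' b := (hcop.of_isCoprime_of_dvd_left (hdm a' hma')).of_isCoprime_of_dvd_right (hdn b hnb)
  have had : a ∣ a' := cop1.dvd_of_dvd_mul_right ⟨b, h.symm⟩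
  have had' : a' ∣ a := cop2.dvd_of_dvd_mul_right ⟨b', h⟩
  obtain ⟨u, hu⟩ := associated_of_dvd_dvd had had'
  refine ⟨u, ⟨hu.symm, ?_⟩, ?_⟩
  · -- b' = u⁻¹ * b
    have : a * b = a * (u * b') := by rw [h, ← hu]; ring
    have hb : b = u * b' := mul_left_cancel₀ ha0 this
    rw [hb]; rw [← mul_assoc]; simp
  · rintro v ⟨hv, -⟩
    have : a * (u : ℤ[i]) = a * (v : ℤ[i]) := by rw [hu, ← hv]
    exact Units.ext (mul_left_cancel₀ ha0 this.symm)

lemma split_exists : ∀ m n : ℕ, ∀ z : ℤ[i], Nat.Coprime m n → z.norm = ((m*n : ℕ) : ℤ) →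
    ∃ a b : ℤ[i], a * b = z ∧ a.norm = (m:ℤ) ∧ b.norm = (n:ℤ) := by
  intro m
  induction m using Nat.strong_induction_on with
  | _ m IH =>
  intro n z hmn hz
  rcases Nat.eq_zero_or_pos m with rfl | hm0
  · -- m = 0 : coprime 0 n → n = 1, z = 0
    have hn1 : n = 1 := by simpa [Nat.Coprime] using hmn
    subst hn1
    have : z = 0 := by
      rw [← GaussianInt.norm_eq_zero]
      simpa using hz
    exact ⟨0, 1, by simp [this], by simp, by simp⟩
  rcases eq_or_lt_of_le (Nat.succ_le_of_lt hm0) with h1 | hm1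
  · -- m = 1
    exact ⟨1, z, by simp, by simp [← h1], by simpa [← h1] using hz⟩
  -- m ≥ 2
  set p := m.minFac with hp_def
  have hp : p.Prime := Nat.minFac_prime (by omega)
  have hpm : p ∣ m := Nat.minFac_dvd m
  haveI : Fact p.Prime := ⟨hp⟩
  have hpn : ¬ p ∣ n := fun hd => hp.one_lt.ne' (Nat.eq_one_of_dvd_coprimes hmn hpm hd)
  by_cases h3 : p % 4 = 3
  · -- p inert
    have hπ : Prime (p : ℤ[i]) := GaussianInt.prime_of_nat_prime_of_mod_four_eq_three p h3
    have hdvd : (p : ℤ[i]) ∣ ((m*n : ℕ) : ℤ[i]) := by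
      exact_mod_cast Nat.cast_dvd_cast (Dvd.dvd.mul_right hpm n)
    have hpz : (p : ℤ[i]) ∣ z := by
      rcases prime_dvd_or hπ hz hdvd with h | h
      · exact h
      · simpa using h
    obtain ⟨z₁, hz₁⟩ := hpz
    have hnorm : ((m*n : ℕ) : ℤ) = (p:ℤ) * (p:ℤ) * z₁.norm := by
      rw [← hz, hz₁, Zsqrtd.norm_mul, Zsqrtd.norm_natCast]
    -- p^2 ∣ m
    obtain ⟨m₁, hm₁⟩ := hpm
    have hn1 : 0 ≤ z₁.norm := GaussianInt.norm_nonneg z₁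
    set n₁ := z₁.norm.toNat with hn₁def
    have hn₁ : z₁.norm = (n₁ : ℤ) := (Int.toNat_of_nonneg hn1).symm
    have hNat : m * n = p * (p * n₁) := by
      have : ((m*n : ℕ) : ℤ) = ((p * (p * n₁) : ℕ) : ℤ) := by
        rw [hnorm, hn₁]; push_cast; ring
      exact_mod_cast this
    have hm₁n : m₁ * n = p * n₁ := by
      have := hNat
      rw [hm₁] at this
      have hp0 : 0 < p := hp.pos
      exact Nat.eq_of_mul_eq_mul_left hp0 (by linarith [this])
    have hpm₁ : p ∣ m₁ := by
      have : p ∣ m₁ * n := ⟨n₁, hm₁n⟩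
      rcases (hp.dvd_mul.1 this) with h | h
      · exact h
      · exact absurd h hpn
    obtain ⟨m₂, hm₂⟩ := hpm₁
    have hm2m : m = p * p * m₂ := by rw [hm₁, hm₂]; ring
    have hm₂_lt : m₂ < m := by nlinarith [hp.two_le]
    have hm₂_cop : m₂.Coprime n := Nat.Coprime.coprime_dvd_left ⟨p*p, by rw [hm2m]; ring⟩ hmn
    have hz₁norm : z₁.norm = ((m₂ * n : ℕ) : ℤ) := by
      have hp0 : (p:ℤ) ≠ 0 := by exact_mod_cast hp.pos.ne'
      have : (p:ℤ) * (p:ℤ) * z₁.norm = (p:ℤ) * (p:ℤ) * ((m₂ * n : ℕ):ℤ) := by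
        rw [← hnorm]; push_cast; rw [hm2m]; push_cast; ring
      exact mul_left_cancel₀ (by positivity) this
    obtain ⟨a₁, b, hab, ha₁, hb⟩ := IH m₂ hm₂_lt n z₁ hm₂_cop hz₁norm
    refine ⟨(p:ℤ[i]) * a₁, b, ?_, ?_, hb⟩
    · rw [hz₁, ← hab]; ring
    · rw [Zsqrtd.norm_mul, Zsqrtd.norm_natCast, ha₁, hm2m]; push_cast; ring
  · -- p split or ramified
    obtain ⟨x, y, hxy⟩ := Nat.Prime.sq_add_sq h3
    set π : ℤ[i] := ⟨(x:ℤ), (y:ℤ)⟩ with hπdef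
    have hπnorm : π.norm = (p : ℤ) := by
      rw [Zsqrtd.norm_def]
      push_cast [← hxy]
      ring
    have hπp : Prime π := prime_of_norm_prime (by rw [hπnorm]; exact Nat.prime_iff_prime_int.mp hp)
    have hstarnorm : (star π).norm = (p : ℤ) := by rw [Zsqrtd.norm_conj, hπnorm]
    have hstarp : Prime (star π) := prime_of_norm_prime (by rw [hstarnorm]; exact Nat.prime_iff_prime_int.mp hp)
    have hdvd : ∀ ρ : ℤ[i], ρ.norm = (p:ℤ) → ρ ∣ ((m*n : ℕ) : ℤ[i]) := by
      intro ρ hρ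
      have h1 : ρ ∣ (p : ℤ[i]) := ⟨star ρ, by
        have := Zsqrtd.norm_eq_mul_conj ρ
        rw [hρ] at this
        exact_mod_cast this⟩
      exact h1.trans (by exact_mod_cast Nat.cast_dvd_cast (Dvd.dvd.mul_right hpm n))
    have key : ∀ ρ : ℤ[i], Prime ρ → ρ.norm = (p:ℤ) → ρ ∣ z →
        ∃ a b : ℤ[i], a * b = z ∧ a.norm = (m:ℤ) ∧ b.norm = (n:ℤ) := by
      intro ρ hρp hρn hρz
      obtain ⟨z₁, hz₁⟩ := hρz
      have hnorm : ((m*n : ℕ) : ℤ) = (p:ℤ) * z₁.norm := by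
        rw [← hz, hz₁, Zsqrtd.norm_mul, hρn]
      obtain ⟨m₁, hm₁⟩ := hpm
      have hn1 : 0 ≤ z₁.norm := GaussianInt.norm_nonneg z₁
      set n₁ := z₁.norm.toNat with hn₁def
      have hn₁ : z₁.norm = (n₁ : ℤ) := (Int.toNat_of_nonneg hn1).symm
      have hNat : m * n = p * n₁ := by
        have : ((m*n : ℕ) : ℤ) = ((p * n₁ : ℕ) : ℤ) := by rw [hnorm, hn₁]; push_cast; ring
        exact_mod_cast this
      have hm₁_lt : m₁ < m := by nlinarith [hp.two_le]
      have hm₁_cop : m₁.Coprime n := Nat.Coprime.coprime_dvd_left ⟨p, by rw [hm₁]; ring⟩ hmn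
      have hz₁norm : z₁.norm = ((m₁ * n : ℕ) : ℤ) := by
        have : (p:ℤ) * z₁.norm = (p:ℤ) * ((m₁ * n : ℕ):ℤ) := by
          rw [← hnorm]; push_cast; rw [hm₁]; push_cast; ring
        exact mul_left_cancel₀ (by exact_mod_cast hp.pos.ne') this
      obtain ⟨a₁, b, hab, ha₁, hb⟩ := IH m₁ hm₁_lt n z₁ hm₁_cop hz₁norm
      refine ⟨ρ * a₁, b, ?_, ?_, hb⟩
      · rw [hz₁, ← hab]; ring
      · rw [Zsqrtd.norm_mul, hρn, ha₁, hm₁]; push_cast; ring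
    rcases prime_dvd_or hπp hz (hdvd π hπnorm) with h | h
    · exact key π hπp hπnorm h
    · exact key (star π) hstarp hstarnorm h

open scoped Classical in
noncomputable def rep (m n : ℕ) (z : ℤ[i]) : ℤ[i] × ℤ[i] :=
  if h : ∃ p : ℤ[i] × ℤ[i], p.1 * p.2 = z ∧ p.1.norm = (m:ℤ) ∧ p.2.norm = (n:ℤ) then h.choose
  else (0, 0)

lemma rep_spec {m n : ℕ} (hmn : m.Coprime n) {z : ℤ[i]} (hz : z ∈ S (m*n)) :
    (rep m n z).1 * (rep m n z).2 = z ∧ (rep m n z).1.norm = (m:ℤ) ∧ (rep m n z).2.norm = (n:ℤ) := by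
  have h : ∃ p : ℤ[i] × ℤ[i], p.1 * p.2 = z ∧ p.1.norm = (m:ℤ) ∧ p.2.norm = (n:ℤ) := by
    obtain ⟨a, b, h1, h2, h3⟩ := split_exists m n z hmn hz
    exact ⟨(a, b), h1, h2, h3⟩
  rw [rep, dif_pos h]
  exact h.choose_spec

open scoped Classical in
open scoped Classical in
noncomputable def theUnit (m n : ℕ) (a b : ℤ[i]) : ℤ[i]ˣ :=
  if h : ∃ u : ℤ[i]ˣ, a = (rep m n (a*b)).1 * u ∧ b = ↑u⁻¹ * (rep m n (a*b)).2 then h.choose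
  else 1

lemma theUnit_spec {m n : ℕ} (hmn : m.Coprime n) (hm0 : m ≠ 0) {a b : ℤ[i]}
    (ha : a.norm = (m:ℤ)) (hb : b.norm = (n:ℤ)) :
    a = (rep m n (a*b)).1 * (theUnit m n a b) ∧
      b = ↑(theUnit m n a b)⁻¹ * (rep m n (a*b)).2 := by
  have hz : a * b ∈ S (m * n) := by
    simp only [S, Set.mem_setOf_eq, Zsqrtd.norm_mul, ha, hb]; push_cast; ring
  obtain ⟨h1, h2, h3⟩ := rep_spec hmn hz
  have h := split_unique hmn hm0 h2 h3 ha hb (by rw [h1])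
  rw [theUnit, dif_pos h.exists]
  exact h.exists.choose_spec

noncomputable def splitEquiv (m n : ℕ) (hm : m ≠ 0) (hmn : m.Coprime n) :
    (↥(S m) × ↥(S n)) ≃ ℤ[i]ˣ × ↥(S (m * n)) where
  toFun p := ⟨theUnit m n p.1 p.2,
    ⟨(p.1 : ℤ[i]) * p.2, by
      rw [mem_S, Zsqrtd.norm_mul, mem_S.1 p.1.2, mem_S.1 p.2.2]
      push_cast; ring⟩⟩
  invFun q := ⟨⟨(rep m n q.2).1 * q.1, by
      have h := rep_spec hmn q.2.2
      rw [mem_S, Zsqrtd.norm_mul, h.2.1, norm_unit, mul_one]⟩,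
    ⟨((q.1⁻¹ : ℤ[i]ˣ) : ℤ[i]) * (rep m n q.2).2, by
      have h := rep_spec hmn q.2.2
      rw [mem_S, Zsqrtd.norm_mul, h.2.2, norm_unit, one_mul]⟩⟩
  left_inv p := by
    obtain ⟨⟨a, ha⟩, ⟨b, hb⟩⟩ := p
    have hspec := theUnit_spec hmn hm (mem_S.1 ha) (mem_S.1 hb)
    dsimp only
    exact Prod.ext (Subtype.ext hspec.1.symm) (Subtype.ext hspec.2.symm)
  right_inv q := by
    obtain ⟨u, ⟨z, hz⟩⟩ := q
    have h := rep_spec hmn hz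
    have habz : ((rep m n z).1 * ↑u) * ((↑u⁻¹ : ℤ[i]) * (rep m n z).2) = z := by
      have e : ((rep m n z).1 * ↑u) * ((↑u⁻¹ : ℤ[i]) * (rep m n z).2)
          = ((rep m n z).1 * (rep m n z).2) * ((u : ℤ[i]) * ↑u⁻¹) := by ring
      rw [e, Units.mul_inv, mul_one, h.1]
    have ha : ((rep m n z).1 * ↑u).norm = (m : ℤ) := by
      rw [Zsqrtd.norm_mul, h.2.1, norm_unit, mul_one]
    have hb : (((↑u⁻¹ : ℤ[i])) * (rep m n z).2).norm = (n : ℤ) := by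
      rw [Zsqrtd.norm_mul, h.2.2, norm_unit, one_mul]
    have hspec := theUnit_spec hmn hm ha hb
    rw [habz] at hspec
    have huniq := split_unique hmn hm h.2.1 h.2.2 ha hb (by rw [h.1, habz])
    have h1 : theUnit m n ((rep m n z).1 * ↑u) ((↑u⁻¹ : ℤ[i]) * (rep m n z).2) = u :=
      huniq.unique hspec ⟨rfl, rfl⟩
    dsimp only
    exact Prod.ext h1 (Subtype.ext habz)

lemma ncard_S_mul (m n : ℕ) (hm : m ≠ 0) (hmn : m.Coprime n) :
    (S m).ncard * (S n).ncard = 4 * (S (m*n)).ncard := by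
  have := (S_finite m).to_subtype
  have := (S_finite n).to_subtype
  have := (S_finite (m*n)).to_subtype
  have h := Nat.card_congr (splitEquiv m n hm hmn)
  rw [Nat.card_prod, Nat.card_prod, card_units, Nat.card_coe_set_eq, Nat.card_coe_set_eq,
    Nat.card_coe_set_eq] at h
  exact h

lemma norm_cancel {c k : ℕ} (hc : c ≠ 0) {ρ w : ℤ[i]} (hρ : ρ.norm = (c:ℤ))
    (h : (ρ*w).norm = ((c*k : ℕ) : ℤ)) : w ∈ S k := by
  rw [Zsqrtd.norm_mul, hρ] at h
  push_cast at h
  exact mem_S.2 (mul_left_cancel₀ (by exact_mod_cast hc) h)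

lemma ρ_ne_zero {c : ℕ} (hc : c ≠ 0) {ρ : ℤ[i]} (hρ : ρ.norm = (c:ℤ)) : ρ ≠ 0 := by
  intro h0
  rw [h0, Zsqrtd.norm_zero] at hρ
  exact hc (by exact_mod_cast hρ.symm)

lemma S_image_eq {ρ : ℤ[i]} {c k : ℕ} (hρ : ρ.norm = (c:ℤ)) (hc : c ≠ 0)
    (hdvd : ∀ z ∈ S (c*k), ρ ∣ z) : S (c*k) = (fun z => ρ * z) '' S k := by
  ext z
  constructor
  · intro hz
    obtain ⟨w, hw⟩ := hdvd z hz
    exact ⟨w, norm_cancel hc hρ (hw ▸ hz), hw.symm⟩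
  · rintro ⟨w, hw, rfl⟩
    rw [mem_S, Zsqrtd.norm_mul, hρ, mem_S.1 hw]
    push_cast; ring

lemma ncard_S_image {ρ : ℤ[i]} {c k : ℕ} (hρ : ρ.norm = (c:ℤ)) (hc : c ≠ 0)
    (hdvd : ∀ z ∈ S (c*k), ρ ∣ z) : (S (c*k)).ncard = (S k).ncard := by
  rw [S_image_eq hρ hc hdvd]
  exact Set.ncard_image_of_injective _ (mul_right_injective₀ (ρ_ne_zero hc hρ))

-- p = 2
lemma two_eq : ((⟨1,1⟩ : ℤ[i]) * star ⟨1,1⟩) = (2 : ℤ[i]) := by decide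

lemma star_pi2 : star (⟨1,1⟩ : ℤ[i]) = (⟨1,1⟩ : ℤ[i]) * ⟨0,-1⟩ := by decide

lemma norm_pi2 : (⟨1,1⟩ : ℤ[i]).norm = ((2:ℕ):ℤ) := by decide

lemma prime_pi2 : Prime (⟨1,1⟩ : ℤ[i]) := by
  apply prime_of_norm_prime
  rw [norm_pi2]
  exact_mod_cast Nat.prime_iff_prime_int.mp Nat.prime_two

lemma ncard_S_two_pow (k : ℕ) : (S (2^k)).ncard = 4 := by
  induction k with
  | zero => simpa using ncard_S_one
  | succ k ih =>
    have hpow : 2^(k+1) = 2 * 2^k := by ring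
    rw [hpow, ncard_S_image norm_pi2 (by norm_num) ?_, ih]
    intro z hz
    have hdvd2 : (⟨1,1⟩ : ℤ[i]) ∣ ((2 * 2^k : ℕ) : ℤ[i]) := by
      refine Dvd.dvd.trans ⟨star ⟨1,1⟩, two_eq.symm⟩ ?_
      exact_mod_cast Nat.cast_dvd_cast (Dvd.intro (2^k) rfl)
    rcases prime_dvd_or prime_pi2 (mem_S.1 hz) hdvd2 with h | h
    · exact h
    · exact dvd_trans ⟨⟨0,-1⟩, star_pi2⟩ h

lemma ncard_S_p3 {p : ℕ} (hp : p.Prime) (h3 : p % 4 = 3) :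
    ∀ k : ℕ, (S (p^k)).ncard = if Even k then 4 else 0 := by
  haveI : Fact p.Prime := ⟨hp⟩
  have hπ : Prime ((p:ℕ) : ℤ[i]) := GaussianInt.prime_of_nat_prime_of_mod_four_eq_three p h3
  have hnormp : ((p : ℤ[i])).norm = ((p^2 : ℕ) : ℤ) := by
    rw [Zsqrtd.norm_natCast]; push_cast; ring
  have hdvd : ∀ k : ℕ, 1 ≤ k → ∀ z ∈ S (p^k), (p : ℤ[i]) ∣ z := by
    intro k hk z hz
    have : (p : ℤ[i]) ∣ ((p^k : ℕ) : ℤ[i]) := by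
      exact_mod_cast Nat.cast_dvd_cast (dvd_pow_self p (by omega))
    rcases prime_dvd_or hπ (mem_S.1 hz) this with h | h
    · exact h
    · simpa using h
  intro k
  induction k using Nat.strong_induction_on with
  | _ k IH =>
  match k with
  | 0 => simpa using ncard_S_one
  | 1 =>
    simp only [Nat.not_even_one, if_false]
    rw [Set.ncard_eq_zero (S_finite _)]
    ext z
    simp only [Set.mem_empty_iff_false, iff_false]
    intro hz
    obtain ⟨w, hw⟩ := hdvd 1 le_rfl z hz
    have hzn := mem_S.1 hz
    rw [hw, Zsqrtd.norm_mul, Zsqrtd.norm_natCast] at hzn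
    have hwn : 0 ≤ w.norm := GaussianInt.norm_nonneg w
    have hp2 : 2 ≤ p := hp.two_le
    have : (p:ℤ) ≥ 2 := by exact_mod_cast hp2
    push_cast at hzn
    rw [pow_one] at hzn
    rcases eq_or_lt_of_le hwn with h0 | h1
    · rw [← h0, mul_zero] at hzn; linarith
    · have h1' : 1 ≤ w.norm := h1
      nlinarith
  | (k+2) =>
    have hpow : p^(k+2) = p^2 * p^k := by ring
    have h1 : (S (p^(k+2))).ncard = (S (p^k)).ncard := by
      rw [hpow]
      exact ncard_S_image hnormp (pow_ne_zero _ hp.pos.ne') (by rw [← hpow]; exact hdvd (k+2) (by omega))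
    rw [h1, IH k (by omega)]
    have h2 : Even (k+2) ↔ Even k := by simp [Nat.even_add]
    exact (if_congr h2 rfl rfl).symm

lemma ncard_S_p1 {p : ℕ} (hp : p.Prime) (h1 : p % 4 = 1) :
    ∀ k : ℕ, (S (p^k)).ncard = 4 * (k+1) := by
  haveI : Fact p.Prime := ⟨hp⟩
  have hp2 : (2:ℕ) ≤ p := hp.two_le
  obtain ⟨x, y, hxy⟩ := Nat.Prime.sq_add_sq (p := p) (by omega)
  set π : ℤ[i] := ⟨(x:ℤ), (y:ℤ)⟩ with hπdef
  have hπnorm : π.norm = (p : ℤ) := by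
    rw [Zsqrtd.norm_def]; push_cast [← hxy]; ring
  have hstarnorm : (star π).norm = (p : ℤ) := by rw [Zsqrtd.norm_conj, hπnorm]
  have hπp : Prime π := prime_of_norm_prime (by rw [hπnorm]; exact Nat.prime_iff_prime_int.mp hp)
  have hstarp : Prime (star π) := prime_of_norm_prime
    (by rw [hstarnorm]; exact Nat.prime_iff_prime_int.mp hp)
  have hmulconj : π * star π = ((p:ℕ) : ℤ[i]) := by
    have h := Zsqrtd.norm_eq_mul_conj π
    rw [hπnorm] at h
    exact_mod_cast h.symm
  have hπ0 : π ≠ 0 := ρ_ne_zero hp.pos.ne' hπnorm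
  have hstar0 : star π ≠ 0 := ρ_ne_zero hp.pos.ne' hstarnorm
  have hnass : ¬ (star π ∣ π) := by
    intro hdvd
    obtain ⟨u, hu⟩ := hstarp.irreducible.associated_of_dvd hπp.irreducible hdvd
    have hu1 : (u : ℤ[i]) ∈ S 1 := by
      rw [mem_S]
      have h := Zsqrtd.norm_eq_one_iff.2 u.isUnit
      have h2 := GaussianInt.norm_nonneg (u : ℤ[i])
      omega
    rw [S_one_eq] at hu1
    simp only [Set.mem_insert_iff, Set.mem_singleton_iff] at hu1
    have hstarπ : star π = (⟨(x:ℤ), -(y:ℤ)⟩ : ℤ[i]) := rfl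
    rcases hu1 with h | h | h | h <;> rw [h] at hu <;>
        rw [hstarπ] at hu <;>
        have hre := congrArg Zsqrtd.re hu <;>
        have him := congrArg Zsqrtd.im hu <;>
        simp only [Zsqrtd.re_mul, Zsqrtd.im_mul, hπdef] at hre him
    · -- u = 1 : y = 0, p = x^2
      have hy : y = 0 := by omega
      have hxp : x * x = p := by
        have := hxy; rw [hy] at this; nlinarith
      rcases hp.eq_one_or_self_of_dvd x ⟨x, hxp.symm⟩ with h' | h'
      · rw [h'] at hxp; omega
      · rw [h'] at hxp; nlinarith
    · -- u = -1 : x = 0, p = y^2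
      have hx : x = 0 := by omega
      have hyp : y * y = p := by
        have := hxy; rw [hx] at this; nlinarith
      rcases hp.eq_one_or_self_of_dvd y ⟨y, hyp.symm⟩ with h' | h'
      · rw [h'] at hyp; omega
      · rw [h'] at hyp; nlinarith
    · -- u = i : x = y, p = 2x^2
      have hxy' : (x:ℤ) = (y:ℤ) := by omega
      have hxyn : x = y := by exact_mod_cast hxy'
      have h2p : 2 ∣ p := ⟨x*x, by rw [← hxy]; rw [hxyn]; ring⟩
      rcases (Nat.Prime.eq_one_or_self_of_dvd hp 2 h2p) with h' | h' <;> omega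
    · -- u = -i : x = -y : x = y = 0
      ring_nf at hre him
      have hx : x = 0 := by omega
      have hy : y = 0 := by omega
      rw [hx, hy] at hxy
      norm_num at hxy
      omega
  -- counting
  have hAB : ∀ k : ℕ, S (p^(k+1)) =
      (fun z => π * z) '' S (p^k) ∪ (fun z => star π * z) '' S (p^k) := by
    intro k
    have e : p^(k+1) = p * p^k := by ring
    ext z
    constructor
    · intro hz
      have hz' : z.norm = ((p * p^k : ℕ) : ℤ) := by rw [← e]; exact mem_S.1 hz
      have hdvdp : π ∣ ((p^(k+1) : ℕ) : ℤ[i]) :=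
        dvd_trans ⟨star π, hmulconj.symm⟩
          (by exact_mod_cast Nat.cast_dvd_cast (dvd_pow_self p (Nat.succ_ne_zero k)))
      rcases prime_dvd_or hπp (mem_S.1 hz) hdvdp with h | h
      · obtain ⟨w, rfl⟩ := h
        exact Or.inl ⟨w, norm_cancel hp.pos.ne' hπnorm hz', rfl⟩
      · obtain ⟨w, rfl⟩ := h
        exact Or.inr ⟨w, norm_cancel hp.pos.ne' hstarnorm hz', rfl⟩
    · rintro (⟨w, hw, rfl⟩ | ⟨w, hw, rfl⟩) <;> rw [mem_S, Zsqrtd.norm_mul] <;>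
        [rw [hπnorm]; rw [hstarnorm]] <;> rw [mem_S.1 hw] <;> push_cast <;> ring
  have hInter : ∀ k : ℕ,
      ((fun z => π * z) '' S (p^(k+1))) ∩ ((fun z => star π * z) '' S (p^(k+1)))
        = (fun z => ((p:ℕ) : ℤ[i]) * z) '' S (p^k) := by
    intro k
    have e : p^(k+1) = p * p^k := by ring
    ext z
    constructor
    · rintro ⟨⟨w₁, hw₁, rfl⟩, ⟨w₂, hw₂, hw₂'⟩⟩
      have hdvd : star π ∣ π * w₁ := ⟨w₂, hw₂'.symm⟩
      have hw : star π ∣ w₁ := (hstarp.dvd_mul.1 hdvd).resolve_left hnass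
      obtain ⟨v, rfl⟩ := hw
      refine ⟨v, ?_, ?_⟩
      · apply norm_cancel hp.pos.ne' hstarnorm
        rw [← e]; exact mem_S.1 hw₁
      · dsimp only; rw [← mul_assoc, hmulconj]
    · rintro ⟨v, hv, rfl⟩
      constructor
      · refine ⟨star π * v, ?_, by dsimp only; rw [← mul_assoc, hmulconj]⟩
        rw [mem_S, Zsqrtd.norm_mul, hstarnorm, mem_S.1 hv, e]; push_cast; ring
      · refine ⟨π * v, ?_, by dsimp only; rw [← mul_assoc, mul_comm (star π) π, hmulconj]⟩
        rw [mem_S, Zsqrtd.norm_mul, hπnorm, mem_S.1 hv, e]; push_cast; ring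
  have hfin : ∀ (w : ℤ[i]) (k : ℕ), ((fun z => w * z) '' S k).Finite :=
    fun w k => (S_finite k).image _
  have hcard_img : ∀ (w : ℤ[i]), w ≠ 0 → ∀ k : ℕ,
      ((fun z => w * z) '' S (p^k)).ncard = (S (p^k)).ncard :=
    fun w hw k => Set.ncard_image_of_injective _ (mul_right_injective₀ hw)
  have hf1 : (S (p^1)).ncard = 8 := by
    have hdisj : Disjoint ((fun z => π * z) '' S (p^0)) ((fun z => star π * z) '' S (p^0)) := by
      rw [pow_zero, Set.disjoint_left]
      rintro z ⟨w, hw, rfl⟩ ⟨w', hw', hw''⟩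
      have hu : IsUnit w := mem_S_one.1 hw
      have hd1 : star π ∣ π * w := ⟨w', hw''.symm⟩
      obtain ⟨v, hv⟩ := hu.exists_right_inv
      have hd2 : π * w ∣ π := ⟨v, by rw [mul_assoc, hv, mul_one]⟩
      exact hnass (hd1.trans hd2)
    rw [hAB 0, Set.ncard_union_eq hdisj (hfin _ _) (hfin _ _),
      hcard_img π hπ0 0, hcard_img (star π) hstar0 0, pow_zero, ncard_S_one]
  have hp0 : ((p:ℕ) : ℤ[i]) ≠ 0 := Nat.cast_ne_zero.2 hp.pos.ne'
  have hrec : ∀ k : ℕ, (S (p^(k+2))).ncard + (S (p^k)).ncard = 2 * (S (p^(k+1))).ncard := by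
    intro k
    have key := Set.ncard_union_add_ncard_inter ((fun z => π * z) '' S (p^(k+1)))
      ((fun z => star π * z) '' S (p^(k+1))) (hfin _ _) (hfin _ _)
    rw [hInter k, hcard_img π hπ0 (k+1), hcard_img (star π) hstar0 (k+1),
      Set.ncard_image_of_injective _ (mul_right_injective₀ hp0)] at key
    rw [hAB (k+1)]
    omega
  intro k
  induction k using Nat.strong_induction_on with
  | _ k IH =>
  match k with
  | 0 => simpa using ncard_S_one
  | 1 => rw [hf1]
  | (k+2) =>
    have h2 := hrec k
    rw [IH (k+1) (by omega), IH k (by omega)] at h2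
    omega

noncomputable def chi : ArithmeticFunction ℤ :=
  ⟨fun n => ZMod.χ₄ (n : ZMod 4), by simp⟩

lemma chi_apply (n : ℕ) : chi n = ZMod.χ₄ (n : ZMod 4) := rfl

lemma chi_mult : chi.IsMultiplicative := by
  constructor
  · rw [chi_apply]; norm_num
  · intro m n _
    rw [chi_apply, chi_apply, chi_apply]
    push_cast
    rw [map_mul]

noncomputable def G : ArithmeticFunction ℤ := ↑ArithmeticFunction.zeta * chi

lemma G_apply (n : ℕ) : G n = ∑ d ∈ n.divisors, ZMod.χ₄ (d : ZMod 4) := by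
  rw [G, ArithmeticFunction.coe_zeta_mul_apply]
  rfl

lemma G_mult : G.IsMultiplicative :=
  ArithmeticFunction.isMultiplicative_zeta.natCast.mul chi_mult

lemma chi_two_pow (j : ℕ) (hj : 1 ≤ j) : chi (2^j) = 0 := by
  rw [chi_apply, ZMod.χ₄_nat_eq_if_mod_four]
  have h2 : 2^j % 2 = 0 := by
    rw [Nat.pow_mod]
    simp [Nat.zero_pow (by omega : 0 < j)]
  simp [h2]

lemma G_two_pow (k : ℕ) : G (2^k) = 1 := by
  rw [G_apply, Nat.sum_divisors_prime_pow Nat.prime_two]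
  rw [Finset.sum_eq_single 0]
  · norm_num
  · intro j _ hj
    have h1 : 1 ≤ j := Nat.one_le_iff_ne_zero.2 hj
    have := chi_two_pow j h1
    rw [chi_apply] at this
    exact this
  · intro h; simp at h

lemma G_p1 (p : ℕ) (hp : p.Prime) (h1 : p % 4 = 1) (k : ℕ) : G (p^k) = (k+1 : ℤ) := by
  rw [G_apply, Nat.sum_divisors_prime_pow hp]
  have : ∀ j, ZMod.χ₄ ((p^j : ℕ) : ZMod 4) = 1 := by
    intro j
    push_cast
    rw [map_pow]
    rw [show ((p:ZMod 4)) = ((p:ℕ) : ZMod 4) from rfl]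
    rw [ZMod.χ₄_nat_one_mod_four h1]
    exact one_pow j
  simp only [this]
  simp

lemma G_p3 (p : ℕ) (hp : p.Prime) (h3 : p % 4 = 3) (k : ℕ) :
    G (p^k) = if Even k then 1 else 0 := by
  rw [G_apply, Nat.sum_divisors_prime_pow hp]
  have : ∀ j : ℕ, ZMod.χ₄ ((p^j : ℕ) : ZMod 4) = (-1)^j := by
    intro j
    push_cast
    rw [map_pow]
    rw [show ((p:ZMod 4)) = ((p:ℕ) : ZMod 4) from rfl]
    rw [ZMod.χ₄_nat_three_mod_four h3]
  simp only [this]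
  rw [neg_one_geom_sum]
  by_cases h : Even k
  · have : ¬ Even (k+1) := by simp [Nat.even_add_one, h]
    simp [h, this]
  · have : Even (k+1) := by simp [Nat.even_add_one, h]
    simp [h, this]


lemma key_eq : ∀ m : ℕ, 0 < m → ((S m).ncard : ℤ) = 4 * G m := by
  intro m
  induction m using Nat.recOnPosPrimePosCoprime with
  | prime_pow p n hp1 hn =>
    intro _
    have hp' : p.Prime := hp1
    rcases hp'.eq_two_or_odd with h2 | hodd
    · subst h2
      rw [ncard_S_two_pow, G_two_pow]
      norm_num
    · have h14 : p % 4 = 1 ∨ p % 4 = 3 := by omega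
      rcases h14 with h1 | h3
      · rw [ncard_S_p1 hp' h1, G_p1 p hp' h1]
        push_cast; ring
      · rw [ncard_S_p3 hp' h3, G_p3 p hp' h3]
        by_cases h : Even n <;> simp [h]
  | zero => intro h; omega
  | one =>
    intro _
    have : G 1 = 1 := G_mult.1
    rw [this, ncard_S_one]
    norm_num
  | coprime a b ha hb hab iha ihb =>
    intro _
    have ha' := iha (by omega)
    have hb' := ihb (by omega)
    have hmul := ncard_S_mul a b (by omega) hab
    have hG := G_mult.2 hab
    have hcast : ((S a).ncard : ℤ) * ((S b).ncard : ℤ) = 4 * ((S (a*b)).ncard : ℤ) := by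
      exact_mod_cast hmul
    rw [ha', hb'] at hcast
    rw [hG]
    linarith

lemma ncard_pairs_eq (m : ℕ) :
    Set.ncard {p : ℤ × ℤ | p.1 ^ 2 + p.2 ^ 2 = (m : ℤ)} = (S m).ncard := by
  have h : {p : ℤ × ℤ | p.1 ^ 2 + p.2 ^ 2 = (m : ℤ)} = (fun z : ℤ[i] => (z.re, z.im)) '' S m := by
    ext q
    simp only [Set.mem_setOf_eq, Set.mem_image]
    constructor
    · intro hq
      refine ⟨⟨q.1, q.2⟩, ?_, rfl⟩
      rw [mem_S, Zsqrtd.norm_def]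
      dsimp only
      linear_combination hq
    · rintro ⟨z, hz, rfl⟩
      have := mem_S.1 hz
      rw [Zsqrtd.norm_def] at this
      dsimp only
      linear_combination this
  rw [h]
  apply Set.ncard_image_of_injective
  intro z w hzw
  have h1 := congrArg Prod.fst hzw
  have h2 := congrArg Prod.snd hzw
  exact Zsqrtd.ext h1 h2

lemma sum_eq_G (m : ℕ) :
    ∑ d ∈ (Nat.divisors m).filter (fun d => Odd d), (-1 : ℤ) ^ ((d - 1) / 2) = G m := by
  rw [G_apply, ← Finset.sum_filter_add_sum_filter_not (m.divisors) (fun d => Odd d)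
    (fun d => (ZMod.χ₄ (d : ZMod 4) : ℤ))]
  have h2 : ∑ d ∈ m.divisors.filter (fun d => ¬ Odd d), (ZMod.χ₄ (d : ZMod 4) : ℤ) = 0 := by
    apply Finset.sum_eq_zero
    intro d hd
    have hde : ¬ Odd d := (Finset.mem_filter.1 hd).2
    have : d % 2 = 0 := Nat.even_iff.1 (Nat.not_odd_iff_even.1 hde)
    rw [show ((d : ZMod 4)) = ((d:ℕ) : ZMod 4) from rfl, ZMod.χ₄_nat_eq_if_mod_four]
    simp [this]
  rw [h2, add_zero]
  apply Finset.sum_congr rfl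
  intro d hd
  have hde : Odd d := (Finset.mem_filter.1 hd).2
  have hd2 : d % 2 = 1 := Nat.odd_iff.1 hde
  rw [show ((d : ZMod 4)) = ((d:ℕ) : ZMod 4) from rfl, ZMod.χ₄_eq_neg_one_pow hd2]
  congr 1
  omega

end SumTwoSquaresAux

theorem sum_two_squares_count (m : ℕ) (hm : 0 < m) :
    (Set.ncard {p : ℤ × ℤ | p.1 ^ 2 + p.2 ^ 2 = (m : ℤ)} : ℤ) =
      4 * ∑ d ∈ (Nat.divisors m).filter (fun d => Odd d), (-1 : ℤ) ^ ((d - 1) / 2) := by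
  rw [SumTwoSquaresAux.ncard_pairs_eq, SumTwoSquaresAux.key_eq m hm, SumTwoSquaresAux.sum_eq_G]
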